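/- Let X be a real Banach space with dim(X) ≥ 2 and let x ∈ B_X. For every continuous linear functional x* on X with x*(x) = 1, the rank-one projection P = x* ⊗ x (defined by P(y) = x*(y)·x) satisfies ‖Id − P‖ ≥ Δc(x), where Id is the identity operator on X and the norm is the operator norm. -/

import Mathlib

open Set Metric Filter

variable {X : Type*} [NormedAddCommGroup X] [NormedSpace ℝ X]

/-- The slice `S(f, δ)` of the closed unit ball of `X`, determined by a norm-one functional
`f` and `δ > 0` (the norm and positivity conditions are imposed at use sites). -/
def unitBallSlice (f : X →L[ℝ] ℝ) (δ : ℝ) : Set X :=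
  {y | ‖y‖ ≤ 1 ∧ 1 - δ < f y}

/-- The Daugavet constant of a point: the infimum over all slices of the unit ball of the
supremum of distances from `x` to points of the slice. -/
noncomputable def Dc (x : X) : ℝ :=
  sInf {r | ∃ (f : X →L[ℝ] ℝ) (δ : ℝ), ‖f‖ = 1 ∧ 0 < δ ∧
    r = sSup ((fun y => ‖x - y‖) '' unitBallSlice f δ)}

/-- The Δ-constant of a point: the infimum over all slices of the unit ball containing `x`
of the supremum of distances from `x` to points of the slice. -/
noncomputable def DeltaC (x : X) : ℝ :=
  sInf {r | ∃ (f : X →L[ℝ] ℝ) (δ : ℝ), ‖f‖ = 1 ∧ 0 < δ ∧ x ∈ unitBallSlice f δ ∧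
    r = sSup ((fun y => ‖x - y‖) '' unitBallSlice f δ)}

set_option maxHeartbeats 1000000

/-- For every rank-one projection `P = x* ⊗ x` with `x*(x) = 1`, `‖Id − P‖ ≥ Δc(x)`. -/
theorem norm_id_sub_rankOneProjection_ge [CompleteSpace X] (hdim : 2 ≤ Module.rank ℝ X)
    (x : X) (hx : ‖x‖ ≤ 1) (f : X →L[ℝ] ℝ) (hf : f x = 1) :
    DeltaC x ≤ ‖ContinuousLinearMap.id ℝ X - f.smulRight x‖ := by
  set T := ContinuousLinearMap.id ℝ X - f.smulRight x with hT
  set M := ‖T‖ with hM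
  have hTapp : ∀ y : X, T y = y - f y • x := by
    intro y
    simp [hT, ContinuousLinearMap.smulRight_apply]
  -- `M ≥ 1` since `T` is a nonzero idempotent
  have hM1 : (1 : ℝ) ≤ M := by
    have hy : ∃ y : X, y ≠ f y • x := by
      by_contra hc
      push_neg at hc
      have : Module.rank ℝ X ≤ 1 := by
        rw [rank_le_one_iff]
        exact ⟨x, fun w => ⟨f w, (hc w).symm⟩⟩
      have h2 : (2 : Cardinal) ≤ 1 := hdim.trans this
      norm_num at h2
    obtain ⟨y, hy⟩ := hy
    set z := y - f y • x with hz
    have hzne : z ≠ 0 := sub_ne_zero.mpr hy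
    have hfz : f z = 0 := by simp [hz, hf]
    have hTz : T z = z := by rw [hTapp, hfz]; simp
    have h1 : ‖z‖ ≤ M * ‖z‖ := by
      conv_lhs => rw [← hTz]
      exact T.le_opNorm z
    have hzpos : 0 < ‖z‖ := norm_pos_iff.mpr hzne
    nlinarith
  -- `‖f‖ ≥ 1`
  have hf1 : (1 : ℝ) ≤ ‖f‖ := by
    have h := f.le_opNorm x
    rw [hf] at h
    simp only [norm_one] at h
    nlinarith [f.opNorm_nonneg]
  have hfpos : (0 : ℝ) < ‖f‖ := lt_of_lt_of_le one_pos hf1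
  -- key estimate: for every η ∈ (0,1), DeltaC x ≤ (M + η) / (1 - η)
  have key : ∀ η : ℝ, 0 < η → η < 1 → DeltaC x ≤ (M + η) / (1 - η) := by
    intro η hη0 hη1
    set g : X →L[ℝ] ℝ := ‖f‖⁻¹ • f with hg
    have hgnorm : ‖g‖ = 1 := by
      have : ‖g‖ = ‖‖f‖⁻¹‖ * ‖f‖ := norm_smul _ f
      rw [this, norm_inv, norm_norm, inv_mul_cancel₀ (ne_of_gt hfpos)]
    set δ : ℝ := 1 - (1 - η) / ‖f‖ with hδ
    have hδpos : 0 < δ := by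
      rw [hδ]
      have : (1 - η) / ‖f‖ < 1 := by
        rw [div_lt_one hfpos]; linarith
      linarith
    have h1δ : 1 - δ = (1 - η) / ‖f‖ := by rw [hδ]; ring
    -- x belongs to the slice
    have hxmem : x ∈ unitBallSlice g δ := by
      refine ⟨hx, ?_⟩
      rw [h1δ]
      have hgx : g x = ‖f‖⁻¹ := by simp [hg, hf]
      rw [hgx, div_lt_iff₀ hfpos, inv_mul_cancel₀ (ne_of_gt hfpos)]
      linarith
    -- every point of the slice satisfies `f y > 1 - η`
    have hslice : ∀ y ∈ unitBallSlice g δ, 1 - η < f y := by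
      rintro y ⟨hy1, hy2⟩
      have hgy : g y = ‖f‖⁻¹ * f y := by simp [hg]
      rw [h1δ, hgy, div_lt_iff₀ hfpos] at hy2
      have he : ‖f‖⁻¹ * f y * ‖f‖ = f y := by field_simp
      rw [he] at hy2
      exact hy2
    -- pointwise estimate on the slice
    have hpt : ∀ y : X, ‖y‖ ≤ 1 → 1 - η < f y → ‖x - y‖ ≤ (M + η) / (1 - η) := by
      intro y hy1 hy2
      set t : ℝ := f y with ht
      have ht0 : 0 < t := by rw [ht]; linarith
      have e1 : x - t⁻¹ • y = -(t⁻¹ • T y) := by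
        rw [hTapp, smul_sub, smul_smul, inv_mul_cancel₀ ht0.ne', one_smul, neg_sub, ht]
      have n1 : ‖x - t⁻¹ • y‖ ≤ t⁻¹ * M := by
        rw [e1, norm_neg, norm_smul, Real.norm_eq_abs, abs_of_pos (inv_pos.mpr ht0)]
        have := T.le_opNorm y
        have hTy : ‖T y‖ ≤ M := by
          calc ‖T y‖ ≤ M * ‖y‖ := T.le_opNorm y
            _ ≤ M * 1 := by nlinarith
            _ = M := mul_one M
        exact mul_le_mul_of_nonneg_left hTy (le_of_lt (inv_pos.mpr ht0))
      have n2 : ‖t⁻¹ • y - y‖ ≤ |1 - t| / t := by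
        have e2 : t⁻¹ • y - y = (t⁻¹ - 1) • y := by rw [sub_smul, one_smul]
        rw [e2, norm_smul, Real.norm_eq_abs]
        have habs : t⁻¹ - 1 = (1 - t) / t := by field_simp
        rw [habs, abs_div, abs_of_pos ht0]
        have h0 : 0 ≤ |1 - t| / t := div_nonneg (abs_nonneg _) ht0.le
        nlinarith
      have n3 : ‖x - y‖ ≤ (M + |1 - t|) / t := by
        calc ‖x - y‖ ≤ ‖x - t⁻¹ • y‖ + ‖t⁻¹ • y - y‖ := by
              have := norm_sub_le_norm_sub_add_norm_sub x (t⁻¹ • y) y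
              linarith [norm_sub_le (x - t⁻¹ • y) (y - t⁻¹ • y)]
          _ ≤ t⁻¹ * M + |1 - t| / t := add_le_add n1 n2
          _ = (M + |1 - t|) / t := by rw [inv_mul_eq_div, ← add_div]
      refine n3.trans ?_
      rcases le_or_gt t 1 with hcase | hcase
      · rw [abs_of_nonneg (by linarith : (0:ℝ) ≤ 1 - t)]
        rw [div_le_div_iff₀ ht0 (by linarith : (0:ℝ) < 1 - η)]
        nlinarith
      · rw [abs_of_neg (by linarith : (1:ℝ) - t < 0)]
        rw [div_le_div_iff₀ ht0 (by linarith : (0:ℝ) < 1 - η)]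
        nlinarith
    -- the supremum over the slice is at most (M+η)/(1-η)
    set r : ℝ := sSup ((fun y => ‖x - y‖) '' unitBallSlice g δ) with hr
    have hbound : (0:ℝ) ≤ (M + η) / (1 - η) :=
      div_nonneg (by linarith) (by linarith)
    have hrle : r ≤ (M + η) / (1 - η) := by
      apply Real.sSup_le _ hbound
      rintro v ⟨y, hy, rfl⟩
      exact hpt y hy.1 (hslice y hy)
    -- DeltaC x ≤ r
    have hmem : r ∈ {s | ∃ (f : X →L[ℝ] ℝ) (δ : ℝ), ‖f‖ = 1 ∧ 0 < δ ∧ x ∈ unitBallSlice f δ ∧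
        s = sSup ((fun y => ‖x - y‖) '' unitBallSlice f δ)} :=
      ⟨g, δ, hgnorm, hδpos, hxmem, hr⟩
    have hbdd : BddBelow {s : ℝ | ∃ (f : X →L[ℝ] ℝ) (δ : ℝ), ‖f‖ = 1 ∧ 0 < δ ∧
        x ∈ unitBallSlice f δ ∧ s = sSup ((fun y => ‖x - y‖) '' unitBallSlice f δ)} := by
      refine ⟨0, ?_⟩
      rintro s ⟨f', δ', hf', hδ', hxm', rfl⟩
      have h0mem : (0:ℝ) ∈ (fun y => ‖x - y‖) '' unitBallSlice f' δ' :=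
        ⟨x, hxm', by simp⟩
      have hba : BddAbove ((fun y => ‖x - y‖) '' unitBallSlice f' δ') := by
        refine ⟨2, ?_⟩
        rintro v ⟨y, hy, rfl⟩
        calc ‖x - y‖ ≤ ‖x‖ + ‖y‖ := norm_sub_le x y
          _ ≤ 2 := by linarith [hy.1]
      exact le_csSup hba h0mem
    exact (csInf_le hbdd hmem).trans hrle
  -- pass to the limit η → 0
  have : ∀ ε : ℝ, 0 < ε → DeltaC x ≤ M + ε := by
    intro ε hε
    set η : ℝ := ε / (1 + M + ε) with hη
    have hden : (0:ℝ) < 1 + M + ε := by linarith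
    have hη0 : 0 < η := div_pos hε hden
    have hη1 : η < 1 := by
      rw [hη, div_lt_one hden]; linarith
    have h1η : (0:ℝ) < 1 - η := by linarith
    have heq : (M + η) / (1 - η) = M + ε := by
      rw [div_eq_iff h1η.ne', hη]
      field_simp
      ring
    have := key η hη0 hη1
    rwa [heq] at this
  exact le_of_forall_pos_le_add this
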